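/- Let Q be a finite nonempty set of points in the Euclidean plane ℝ² and q ∈ Q. If a point p lies in the farthest-point Voronoi cell C(q) = {p ∈ ℝ² : dist(p,q′) ≤ dist(p,q) for all q′ ∈ Q}, then the entire ray from p in the direction away from q stays in the cell: for every t ≥ 0, the point p + t·(p − q) also lies in C(q). In particular, every nonempty cell C(q) with p ≠ q is unbounded. -/

import Mathlib

open scoped RealInnerProductSpace

theorem stmt_13 (Q : Finset (EuclideanSpace ℝ (Fin 2))) (hQ : Q.Nonempty)
    (q : EuclideanSpace ℝ (Fin 2)) (hq : q ∈ Q)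
    (p : EuclideanSpace ℝ (Fin 2))
    (hp : p ∈ {x : EuclideanSpace ℝ (Fin 2) | ∀ q' ∈ Q, dist x q' ≤ dist x q}) :
    (∀ t : ℝ, 0 ≤ t →
      p + t • (p - q) ∈
        {x : EuclideanSpace ℝ (Fin 2) | ∀ q' ∈ Q, dist x q' ≤ dist x q}) ∧
    (p ≠ q →
      ¬ Bornology.IsBounded
        {x : EuclideanSpace ℝ (Fin 2) | ∀ q' ∈ Q, dist x q' ≤ dist x q}) := by
  have key : ∀ t : ℝ, 0 ≤ t →
      p + t • (p - q) ∈
        {x : EuclideanSpace ℝ (Fin 2) | ∀ q' ∈ Q, dist x q' ≤ dist x q} := by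
    intro t ht q' hq'
    have h1 : dist p q' ≤ dist p q := hp q' hq'
    rw [dist_eq_norm, dist_eq_norm] at h1 ⊢
    have hcs : (inner ℝ (p - q') (p - q) : ℝ) ≤ ‖p - q'‖ * ‖p - q‖ := real_inner_le_norm _ _
    have e1 : p + t • (p - q) - q' = (p - q') + t • (p - q) := by abel
    have e2 : p + t • (p - q) - q = (1 + t) • (p - q) := by
      rw [add_smul, one_smul]; abel
    rw [e1, e2]
    have hsq : ‖(p - q') + t • (p - q)‖ ^ 2 ≤ ‖(1 + t) • (p - q)‖ ^ 2 := by
      rw [norm_add_sq_real, norm_smul, norm_smul, real_inner_smul_right]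
      have habs : ‖t‖ = t := by rw [Real.norm_eq_abs]; exact abs_of_nonneg ht
      have habs2 : ‖(1:ℝ) + t‖ = 1 + t := by
        rw [Real.norm_eq_abs]; exact abs_of_nonneg (by linarith)
      rw [habs, habs2]
      have h2 : (inner ℝ (p - q') (p - q) : ℝ) ≤ ‖p - q‖ * ‖p - q‖ :=
        hcs.trans (by nlinarith [norm_nonneg (p - q'), norm_nonneg (p - q)])
      nlinarith [norm_nonneg (p - q'), norm_nonneg (p - q),
        mul_le_mul_of_nonneg_left h2 ht]
    nlinarith [norm_nonneg ((p - q') + t • (p - q)), norm_nonneg ((1 + t) • (p - q)), hsq]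
  refine ⟨key, ?_⟩
  intro hpq hb
  obtain ⟨R, hR⟩ := isBounded_iff_forall_norm_le.1 hb
  have hd : 0 < ‖p - q‖ := by
    rw [norm_pos_iff, sub_ne_zero]; exact hpq
  have hpR : ‖p‖ ≤ R := by
    have := hR p (by simpa using key 0 le_rfl)
    simpa using this
  set t : ℝ := (R + ‖p‖ + 1) / ‖p - q‖ with ht
  have ht0 : 0 ≤ t := by
    apply div_nonneg _ hd.le
    nlinarith [norm_nonneg p]
  have hx := hR _ (key t ht0)
  have htri : ‖t • (p - q)‖ ≤ ‖p + t • (p - q)‖ + ‖p‖ := by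
    have := norm_sub_le (p + t • (p - q)) p
    simpa [add_sub_cancel_left] using this
  rw [norm_smul, Real.norm_eq_abs, abs_of_nonneg ht0, ht, div_mul_cancel₀ _ hd.ne'] at htri
  linarith
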